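/- Let λ₁ ≥ … ≥ λ_m ≥ 0 be a nonincreasing nonnegative sequence with at least one nonzero element, let I = {I_1,…,I_m} be a partition of {1,…,p}, let W = diag(w₁,…,w_m) with all w_i > 0, and define J_{λ,I,W}(b) = J_λ(W ⟦b⟧_I) for b ∈ ℝ^p. Then the convex conjugate J*_{λ,I,W}(x) = sup_{b ∈ ℝ^p} (xᵀb − J_{λ,I,W}(b)), taking values in the extended reals, equals 0 if W⁻¹ ⟦x⟧_I ∈ C_λ and equals +∞ otherwise. -/

import Mathlib

open Finset

/-- The nonincreasing rearrangement of the absolute values of the coordinates of `b`. -/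
noncomputable def sortedAbs {p : ℕ} (b : Fin p → ℝ) : Fin p → ℝ :=
  fun i => |b (Tuple.sort (fun j => |b j|) (Fin.rev i))|

/-- The sorted ℓ₁ norm `J_λ(b) = Σ_i λ_i |b|_{(i)}`. -/
noncomputable def Jlam {p : ℕ} (lam b : Fin p → ℝ) : ℝ :=
  ∑ i, lam i * sortedAbs b i

/-- The unit ball of the dual of the sorted ℓ₁ norm:
`C_λ = {c : Σ_{i=1}^k |c|_{(i)} ≤ Σ_{i=1}^k λ_i for every k}`. -/
noncomputable def Cset {m : ℕ} (lam : Fin m → ℝ) : Set (Fin m → ℝ) :=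
  {c | ∀ k : Fin m,
    ∑ i ∈ univ.filter (fun i => i ≤ k), sortedAbs c i ≤
      ∑ i ∈ univ.filter (fun i => i ≤ k), lam i}

/-- `groupNorm grp b i = ‖b_{I_i}‖₂`, the Euclidean norm of the restriction of `b` to the
`i`-th group of the partition encoded by `grp`. -/
noncomputable def groupNorm {p m : ℕ} (grp : Fin p → Fin m) (b : Fin p → ℝ)
    (i : Fin m) : ℝ :=
  Real.sqrt (∑ j ∈ univ.filter (fun j => grp j = i), b j ^ 2)

/-! ### Auxiliary lemmas -/

lemma sortedAbs_eq_comp {p : ℕ} (b : Fin p → ℝ) :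
    ∃ σ : Equiv.Perm (Fin p), ∀ i, sortedAbs b i = |b (σ i)| :=
  ⟨(Fin.revPerm).trans (Tuple.sort (fun j => |b j|)), fun _ => rfl⟩

lemma sortedAbs_antitone {p : ℕ} (b : Fin p → ℝ) : Antitone (sortedAbs b) := by
  intro i j hij
  exact Tuple.monotone_sort (fun j => |b j|) (Fin.rev_le_rev.mpr hij)

lemma monotone_rearrangement_unique {n : ℕ} {f g : Fin n → ℝ} (hf : Monotone f)
    (hg : Monotone g) (σ : Equiv.Perm (Fin n)) (h : f = g ∘ σ) : f = g := by
  have h1 : g ∘ σ = g ∘ (Tuple.sort g) :=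
    (Tuple.comp_sort_eq_comp_iff_monotone).mpr (h ▸ hf)
  have h3 : Tuple.sort g = Equiv.refl _ := Tuple.sort_eq_refl_iff_monotone.mpr hg
  rw [h, h1, h3]; rfl

lemma antitone_rearrangement_unique {n : ℕ} {f g : Fin n → ℝ} (hf : Antitone f)
    (hg : Antitone g) (σ : Equiv.Perm (Fin n)) (h : ∀ i, f i = g (σ i)) : f = g := by
  have hfr : Monotone (f ∘ Fin.rev) := fun i j hij => hf (Fin.rev_le_rev.mpr hij)
  have hgr : Monotone (g ∘ Fin.rev) := fun i j hij => hg (Fin.rev_le_rev.mpr hij)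
  have : (f ∘ Fin.rev) = (g ∘ Fin.rev) ∘ (Fin.revPerm.trans (σ.trans Fin.revPerm)) := by
    funext i; simp [Function.comp, h]
  have := monotone_rearrangement_unique hfr hgr _ this
  funext i
  have := congrFun this (Fin.rev i)
  simpa using this

/-- Any antitone rearrangement of `|f|` equals `sortedAbs f`. -/
lemma eq_sortedAbs {n : ℕ} {g : Fin n → ℝ} (f : Fin n → ℝ) (hg : Antitone g)
    (σ : Equiv.Perm (Fin n)) (h : ∀ i, g i = |f (σ i)|) : g = sortedAbs f := by
  obtain ⟨τ, hτ⟩ := sortedAbs_eq_comp f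
  exact antitone_rearrangement_unique hg (sortedAbs_antitone f) (σ.trans ((τ⁻¹ : _)))
    (fun i => by rw [h i, hτ]; simp)

lemma sortedAbs_smul {n : ℕ} (f : Fin n → ℝ) {t : ℝ} (ht : 0 ≤ t) :
    sortedAbs (fun i => t * f i) = fun i => t * sortedAbs f i := by
  obtain ⟨ρ, hρ⟩ := sortedAbs_eq_comp f
  refine (eq_sortedAbs (fun i => t * f i) ?_ ρ ?_).symm
  · intro i j hij
    exact mul_le_mul_of_nonneg_left (sortedAbs_antitone f hij) ht
  · intro i
    rw [hρ i, abs_mul, abs_of_nonneg ht]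

lemma sortedAbs_zero {n : ℕ} : sortedAbs (fun _ : Fin n => (0:ℝ)) = fun _ => 0 := by
  funext i; simp [sortedAbs]

lemma abel_identity (a e : ℕ → ℝ) (n : ℕ) :
    ∑ i ∈ range n, a i * e i =
      ∑ i ∈ range n, (∑ j ∈ range (i+1), a j) * (e i - e (i+1))
        + (∑ j ∈ range n, a j) * e n := by
  induction n with
  | zero => simp
  | succ n ih =>
    rw [sum_range_succ, ih,
      sum_range_succ (f := fun i => (∑ j ∈ range (i+1), a j) * (e i - e (i+1))),
      sum_range_succ (f := a)]
    ring

lemma abel_le (a l e : ℕ → ℝ) (n : ℕ)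
    (he_anti : ∀ k, e (k+1) ≤ e k) (he_nonneg : ∀ k, 0 ≤ e k)
    (hA : ∀ k, ∑ i ∈ range (k+1), a i ≤ ∑ i ∈ range (k+1), l i) :
    ∑ i ∈ range n, a i * e i ≤ ∑ i ∈ range n, l i * e i := by
  rw [abel_identity a e n, abel_identity l e n]
  have hn : ∀ k, ∑ i ∈ range k, a i ≤ ∑ i ∈ range k, l i := by
    intro k
    cases k with
    | zero => simp
    | succ k => exact hA k
  refine add_le_add (Finset.sum_le_sum fun i _ => ?_)
    (mul_le_mul_of_nonneg_right (hn n) (he_nonneg n))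
  exact mul_le_mul_of_nonneg_right (hA i) (sub_nonneg.mpr (he_anti i))

noncomputable def extZ {m : ℕ} (f : Fin m → ℝ) : ℕ → ℝ :=
  fun j => if h : j < m then f ⟨j, h⟩ else 0

lemma extZ_coe {m : ℕ} (f : Fin m → ℝ) (i : Fin m) : extZ f i = f i := by
  simp [extZ, i.isLt]

lemma sum_univ_eq_range {m : ℕ} (f : Fin m → ℝ) :
    ∑ i, f i = ∑ j ∈ range m, extZ f j := by
  rw [Finset.sum_range fun j => extZ f j]
  exact Finset.sum_congr rfl fun i _ => (extZ_coe f i).symm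

lemma sum_filter_le_eq {m : ℕ} (f : Fin m → ℝ) (k : Fin m) :
    ∑ i ∈ univ.filter (fun i => i ≤ k), f i = ∑ j ∈ range (k.val + 1), extZ f j := by
  rw [Finset.sum_filter]
  have h1 : ∀ i : Fin m, (if i ≤ k then f i else 0) =
      (fun j => if j ≤ k.val then extZ f j else 0) (i : ℕ) := by
    intro i
    simp only [Fin.le_def, extZ, i.isLt, dif_pos]
  rw [Finset.sum_congr rfl fun i _ => h1 i]
  rw [← Finset.sum_range (fun j => if j ≤ k.val then extZ f j else 0)]
  rw [← Finset.sum_filter]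
  congr 1
  ext j
  simp only [mem_filter, mem_range, Nat.lt_succ_iff]
  constructor
  · rintro ⟨_, h⟩; exact h
  · intro h; exact ⟨lt_of_le_of_lt h k.isLt, h⟩

/-- The key inequality: for nonneg `c` in the dual ball and nonneg `d`,
`∑ c i * d i ≤ ∑ lam i * sortedAbs d i`. -/
lemma key_ineq {m : ℕ} (lam c d : Fin m → ℝ)
    (hc : ∀ i, 0 ≤ c i) (hd : ∀ i, 0 ≤ d i)
    (hC : ∀ k : Fin m, ∑ i ∈ univ.filter (fun i => i ≤ k), sortedAbs c i ≤
      ∑ i ∈ univ.filter (fun i => i ≤ k), lam i) :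
    ∑ i, c i * d i ≤ ∑ i, lam i * sortedAbs d i := by
  obtain ⟨σ, hσ⟩ := sortedAbs_eq_comp c
  obtain ⟨ρ, hρ⟩ := sortedAbs_eq_comp d
  have hσ' : ∀ i, sortedAbs c i = c (σ i) := fun i => by rw [hσ i, abs_of_nonneg (hc _)]
  have hρ' : ∀ i, sortedAbs d i = d (ρ i) := fun i => by rw [hρ i, abs_of_nonneg (hd _)]
  have step1 : ∑ i, c i * d i ≤ ∑ i, sortedAbs c i * sortedAbs d i := by
    have e1 : ∑ i, c i * d i = ∑ i, sortedAbs c i * sortedAbs d ((σ.trans ρ.symm) i) := by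
      rw [← Equiv.sum_comp σ (fun i => c i * d i)]
      refine Finset.sum_congr rfl fun i _ => ?_
      rw [hσ' i, hρ' ((σ.trans ρ.symm) i)]
      simp
    rw [e1]
    have hmono : Monovary (sortedAbs c) (sortedAbs d) := by
      intro i j hij
      rcases le_or_gt j i with h | h
      · exact sortedAbs_antitone c h
      · exact absurd (sortedAbs_antitone d h.le) (not_le.mpr hij)
    exact hmono.sum_mul_comp_perm_le_sum_mul
  refine step1.trans ?_
  rw [show ∑ i, sortedAbs c i * sortedAbs d i
      = ∑ j ∈ range m, extZ (sortedAbs c) j * extZ (sortedAbs d) j by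
    rw [sum_univ_eq_range]
    refine Finset.sum_congr rfl fun j hj => ?_
    simp only [mem_range] at hj
    simp [extZ, hj]]
  rw [show ∑ i, lam i * sortedAbs d i
      = ∑ j ∈ range m, extZ lam j * extZ (sortedAbs d) j by
    rw [sum_univ_eq_range]
    refine Finset.sum_congr rfl fun j hj => ?_
    simp only [mem_range] at hj
    simp [extZ, hj]]
  refine abel_le _ _ _ m ?_ ?_ ?_
  · intro k
    by_cases h1 : k + 1 < m
    · have h0 : k < m := Nat.lt_of_succ_lt h1
      simp only [extZ, dif_pos h1, dif_pos h0]
      exact sortedAbs_antitone d (by simp [Fin.le_def])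
    · by_cases h0 : k < m
      · simp only [extZ, dif_neg h1, dif_pos h0]
        exact abs_nonneg _
      · simp [extZ, h1, h0]
  · intro k
    by_cases h0 : k < m
    · simp only [extZ, dif_pos h0]
      exact abs_nonneg _
    · simp [extZ, h0]
  · intro k
    by_cases h0 : k < m
    · rw [← sum_filter_le_eq (sortedAbs c) ⟨k, h0⟩, ← sum_filter_le_eq lam ⟨k, h0⟩]
      exact hC _
    · rcases Nat.eq_zero_or_pos m with hm | hm
      · subst hm
        have : ∀ g : Fin 0 → ℝ, ∀ j, extZ g j = 0 := by intro g j; simp [extZ]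
        simp [this]
      · have hk : m - 1 < m := Nat.sub_lt hm one_pos
        have hk1 : m ≤ k + 1 := by omega
        have hsub : ∀ g : Fin m → ℝ,
            ∑ j ∈ range (k+1), extZ g j = ∑ j ∈ range m, extZ g j := by
          intro g
          rw [Finset.sum_subset (Finset.range_subset_range.mpr hk1)]
          intro j _ hj
          simp only [mem_range, not_lt] at hj
          simp [extZ, Nat.not_lt.mpr hj]
        have h2 := hC ⟨m-1, hk⟩
        rw [sum_filter_le_eq, sum_filter_le_eq] at h2
        rw [hsub (sortedAbs c), hsub lam]
        rwa [show m - 1 + 1 = m from Nat.succ_pred_eq_of_pos hm] at h2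

lemma sortedAbs_indicator_eq_zero {m : ℕ} (d : Fin m → ℝ) (hd : ∀ i, d i = 0 ∨ d i = 1)
    (i : Fin m) (hi : (∑ j, d j) ≤ (i : ℕ)) : sortedAbs d i = 0 := by
  obtain ⟨ρ, hρ⟩ := sortedAbs_eq_comp d
  have hval : ∀ j, sortedAbs d j = 0 ∨ sortedAbs d j = 1 := by
    intro j
    rcases hd (ρ j) with h | h <;> rw [hρ j, h] <;> simp
  by_contra hne
  have h1 : sortedAbs d i = 1 := (hval i).resolve_left hne
  have h2 : ∀ j ∈ univ.filter (fun j => j ≤ i), (1:ℝ) ≤ sortedAbs d j := by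
    intro j hj
    simp only [mem_filter] at hj
    exact h1 ▸ sortedAbs_antitone d hj.2
  have h3 : ((i:ℕ) + 1 : ℝ) ≤ ∑ j ∈ univ.filter (fun j => j ≤ i), sortedAbs d j := by
    calc ((i:ℕ) + 1 : ℝ) = ((univ.filter (fun j => j ≤ i)).card : ℝ) := by
          rw [show univ.filter (fun j => j ≤ i) = Finset.Iic i from by ext; simp,
            Fin.card_Iic]
          push_cast; ring
      _ = ∑ j ∈ univ.filter (fun j => j ≤ i), (1:ℝ) := by rw [Finset.sum_const]; simp
      _ ≤ _ := Finset.sum_le_sum h2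
  have h4 : ∑ j ∈ univ.filter (fun j => j ≤ i), sortedAbs d j ≤ ∑ j, sortedAbs d j := by
    refine Finset.sum_le_sum_of_subset_of_nonneg (Finset.filter_subset _ _) ?_
    intro j _ _
    exact abs_nonneg _
  have h5 : ∑ j, sortedAbs d j = ∑ j, d j := by
    rw [show ∑ j, sortedAbs d j = ∑ j, |d (ρ j)| from Finset.sum_congr rfl fun j _ => hρ j,
      Equiv.sum_comp ρ (fun j => |d j|)]
    refine Finset.sum_congr rfl fun j _ => ?_
    rcases hd j with h | h <;> rw [h] <;> simp
  have : ((i:ℕ) + 1 : ℝ) ≤ ((i:ℕ) : ℝ) := by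
    calc ((i:ℕ) + 1 : ℝ) ≤ ∑ j, d j := by linarith
      _ ≤ ((i:ℕ) : ℝ) := hi
  linarith

lemma sortedAbs_le_one {m : ℕ} (d : Fin m → ℝ) (hd : ∀ i, d i = 0 ∨ d i = 1) (i : Fin m) :
    sortedAbs d i ≤ 1 := by
  obtain ⟨ρ, hρ⟩ := sortedAbs_eq_comp d
  rcases hd (ρ i) with h | h <;> rw [hρ i, h] <;> simp

/-- The convex conjugate of `J_{λ,I,W}(b) = J_λ(W⟦b⟧_I)` equals `0` on the set
`{x : W⁻¹⟦x⟧_I ∈ C_λ}` and `+∞` elsewhere. -/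
theorem groupSortedL1_conjugate {p m : ℕ} (grp : Fin p → Fin m)
    (hgrp : Function.Surjective grp)
    (lam : Fin m → ℝ)
    (hlam_anti : ∀ i j : Fin m, i ≤ j → lam j ≤ lam i)
    (hlam_nonneg : ∀ i, 0 ≤ lam i)
    (hlam_ne : ∃ i, lam i ≠ 0)
    (w : Fin m → ℝ) (hw : ∀ i, 0 < w i) :
    ∀ x : Fin p → ℝ,
      ((fun i => (w i)⁻¹ * groupNorm grp x i) ∈ Cset lam →
        (⨆ b : Fin p → ℝ,
          ((∑ i, x i * b i - Jlam lam (fun i => w i * groupNorm grp b i) : ℝ) : EReal)) = 0) ∧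
      ((fun i => (w i)⁻¹ * groupNorm grp x i) ∉ Cset lam →
        (⨆ b : Fin p → ℝ,
          ((∑ i, x i * b i - Jlam lam (fun i => w i * groupNorm grp b i) : ℝ) : EReal)) = ⊤) := by
  intro x
  set c : Fin m → ℝ := fun i => (w i)⁻¹ * groupNorm grp x i with hc_def
  have hgn_nonneg : ∀ (b : Fin p → ℝ) (i : Fin m), 0 ≤ groupNorm grp b i :=
    fun b i => Real.sqrt_nonneg _
  have hc_nonneg : ∀ i, 0 ≤ c i :=
    fun i => mul_nonneg (inv_nonneg.mpr (hw i).le) (hgn_nonneg x i)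
  -- value of the objective at `b = 0`
  have hF0 : ∑ i, x i * (0:ℝ) - Jlam lam (fun i => w i * groupNorm grp (fun _ => (0:ℝ)) i) = 0 := by
    have hgn0 : ∀ i, groupNorm grp (fun _ => (0:ℝ)) i = 0 := by
      intro i; simp [groupNorm]
    have : (fun i => w i * groupNorm grp (fun _ => (0:ℝ)) i) = fun _ : Fin m => (0:ℝ) := by
      funext i; rw [hgn0 i, mul_zero]
    rw [this]
    simp [Jlam, sortedAbs_zero]
  -- homogeneity
  have hgn_smul : ∀ (t : ℝ), 0 ≤ t → ∀ (b : Fin p → ℝ) (i : Fin m),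
      groupNorm grp (fun j => t * b j) i = t * groupNorm grp b i := by
    intro t ht b i
    unfold groupNorm
    rw [show ∑ j ∈ univ.filter (fun j => grp j = i), (t * b j) ^ 2
        = t ^ 2 * ∑ j ∈ univ.filter (fun j => grp j = i), b j ^ 2 by
      rw [Finset.mul_sum]; exact Finset.sum_congr rfl fun j _ => by ring]
    rw [Real.sqrt_mul (sq_nonneg t), Real.sqrt_sq ht]
  have hF_smul : ∀ (t : ℝ), 0 ≤ t → ∀ b : Fin p → ℝ,
      ∑ i, x i * (t * b i) - Jlam lam (fun i => w i * groupNorm grp (fun j => t * b j) i)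
        = t * (∑ i, x i * b i - Jlam lam (fun i => w i * groupNorm grp b i)) := by
    intro t ht b
    have h1 : ∑ i, x i * (t * b i) = t * ∑ i, x i * b i := by
      rw [Finset.mul_sum]; exact Finset.sum_congr rfl fun i _ => by ring
    have h2 : (fun i => w i * groupNorm grp (fun j => t * b j) i)
        = fun i => t * (w i * groupNorm grp b i) := by
      funext i; rw [hgn_smul t ht b i]; ring
    have h3 : Jlam lam (fun i => t * (w i * groupNorm grp b i))
        = t * Jlam lam (fun i => w i * groupNorm grp b i) := by
      unfold Jlam
      rw [sortedAbs_smul _ ht, Finset.mul_sum]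
      exact Finset.sum_congr rfl fun i _ => by ring
    rw [h1, h2, h3]; ring
  constructor
  · -- membership case
    intro hmem
    have hFle : ∀ b : Fin p → ℝ,
        ∑ i, x i * b i ≤ Jlam lam (fun i => w i * groupNorm grp b i) := by
      intro b
      have hcs : ∑ i, x i * b i
          ≤ ∑ t, groupNorm grp x t * groupNorm grp b t := by
        rw [← Finset.sum_fiberwise univ grp (fun j => x j * b j)]
        refine Finset.sum_le_sum fun t _ => ?_
        exact Real.sum_mul_le_sqrt_mul_sqrt _ x b
      have heq : ∀ t, groupNorm grp x t * groupNorm grp b t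
          = c t * (w t * groupNorm grp b t) := by
        intro t
        have hwt : w t ≠ 0 := (hw t).ne'
        have : c t * (w t * groupNorm grp b t)
            = ((w t)⁻¹ * w t) * (groupNorm grp x t * groupNorm grp b t) := by
          rw [hc_def]; ring
        rw [this, inv_mul_cancel₀ hwt, one_mul]
      have hkey := key_ineq lam c (fun t => w t * groupNorm grp b t) hc_nonneg
        (fun t => mul_nonneg (hw t).le (hgn_nonneg b t)) hmem
      calc ∑ i, x i * b i ≤ ∑ t, groupNorm grp x t * groupNorm grp b t := hcs
        _ = ∑ t, c t * (w t * groupNorm grp b t) := Finset.sum_congr rfl fun t _ => heq t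
        _ ≤ ∑ t, lam t * sortedAbs (fun t => w t * groupNorm grp b t) t := hkey
        _ = Jlam lam (fun t => w t * groupNorm grp b t) := rfl
    apply le_antisymm
    · refine iSup_le fun b => ?_
      rw [← EReal.coe_zero, EReal.coe_le_coe_iff]
      exact sub_nonpos.mpr (hFle b)
    · refine le_iSup_of_le (fun _ => (0:ℝ)) ?_
      rw [show ∑ i, x i * (fun _ : Fin p => (0:ℝ)) i
          - Jlam lam (fun i => w i * groupNorm grp (fun _ => (0:ℝ)) i) = 0 from hF0]
      simp
  · -- non-membership case
    intro hnmem
    simp only [Cset, Set.mem_setOf_eq, not_forall, not_le] at hnmem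
    obtain ⟨k, hk⟩ := hnmem
    -- construct a direction with positive objective
    obtain ⟨σ, hσ⟩ := sortedAbs_eq_comp c
    have hσ' : ∀ i, sortedAbs c i = c (σ i) := fun i => by
      rw [hσ i, abs_of_nonneg (hc_nonneg _)]
    set S : Finset (Fin m) := univ.filter (fun i => i ≤ k ∧ sortedAbs c i ≠ 0) with hS_def
    set T : Finset (Fin m) := S.image σ with hT_def
    have hT_gn : ∀ t ∈ T, 0 < groupNorm grp x t := by
      intro t ht
      rcases (hgn_nonneg x t).lt_or_eq with h | h
      · exact h
      · exfalso
        simp only [hT_def, mem_image, hS_def, mem_filter] at ht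
        obtain ⟨i, ⟨_, hi1, hi2⟩, hit⟩ := ht
        apply hi2
        rw [hσ' i, hit]
        show (w t)⁻¹ * groupNorm grp x t = 0
        rw [← h, mul_zero]
    set b : Fin p → ℝ := fun j =>
      if grp j ∈ T then (w (grp j) * groupNorm grp x (grp j))⁻¹ * x j else 0 with hb_def
    -- fiber computations
    have hfib_sq : ∀ t : Fin m,
        ∑ j ∈ univ.filter (fun j => grp j = t), x j ^ 2 = groupNorm grp x t ^ 2 := by
      intro t
      rw [groupNorm, Real.sq_sqrt]
      exact Finset.sum_nonneg fun j _ => sq_nonneg _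
    have hgnb : ∀ t : Fin m, groupNorm grp b t = if t ∈ T then (w t)⁻¹ else 0 := by
      intro t
      by_cases ht : t ∈ T
      · have hxt := hT_gn t ht
        have hwt := hw t
        rw [if_pos ht, groupNorm]
        have : ∀ j ∈ univ.filter (fun j => grp j = t),
            b j ^ 2 = ((w t * groupNorm grp x t)⁻¹)^2 * x j ^ 2 := by
          intro j hj
          simp only [mem_filter] at hj
          rw [hb_def]
          simp only [hj.2, if_pos ht]
          ring
        rw [Finset.sum_congr rfl this, ← Finset.mul_sum, hfib_sq t]
        rw [Real.sqrt_mul (sq_nonneg _), Real.sqrt_sq (by positivity),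
          Real.sqrt_sq hxt.le]
        field_simp
      · rw [if_neg ht, groupNorm]
        have : ∀ j ∈ univ.filter (fun j => grp j = t), b j ^ 2 = 0 := by
          intro j hj
          simp only [mem_filter] at hj
          rw [hb_def]
          simp only [hj.2, if_neg ht]
          ring
        rw [Finset.sum_congr rfl this]
        simp
    set d : Fin m → ℝ := fun t => w t * groupNorm grp b t with hd_def
    have hd01 : ∀ t, d t = 0 ∨ d t = 1 := by
      intro t
      rw [hd_def]
      simp only
      rw [hgnb t]
      by_cases ht : t ∈ T
      · right; rw [if_pos ht]; exact mul_inv_cancel₀ (hw t).ne'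
      · left; rw [if_neg ht]; ring
    -- the inner product
    have hxb : ∑ j, x j * b j = ∑ i ∈ univ.filter (fun i => i ≤ k), sortedAbs c i := by
      rw [← Finset.sum_fiberwise univ grp (fun j => x j * b j)]
      have hfib : ∀ t : Fin m, ∑ j ∈ univ.filter (fun j => grp j = t), x j * b j
          = if t ∈ T then c t else 0 := by
        intro t
        by_cases ht : t ∈ T
        · have hxt := hT_gn t ht
          have hwt := hw t
          rw [if_pos ht]
          have : ∀ j ∈ univ.filter (fun j => grp j = t),
              x j * b j = (w t * groupNorm grp x t)⁻¹ * x j ^ 2 := by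
            intro j hj
            simp only [mem_filter] at hj
            rw [hb_def]
            simp only [hj.2, if_pos ht]
            ring
          rw [Finset.sum_congr rfl this, ← Finset.mul_sum, hfib_sq t, hc_def]
          field_simp
        · rw [if_neg ht]
          refine Finset.sum_eq_zero fun j hj => ?_
          simp only [mem_filter] at hj
          rw [hb_def]
          simp only [hj.2, if_neg ht]
          ring
      rw [Finset.sum_congr rfl fun t _ => hfib t, Finset.sum_ite_mem, univ_inter]
      rw [hT_def, Finset.sum_image (fun i _ j _ h => σ.injective h)]
      rw [Finset.sum_congr rfl (fun i _ => (hσ' i).symm)]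
      refine Finset.sum_subset ?_ ?_
      · intro i hi
        simp only [hS_def, mem_filter] at hi ⊢
        exact ⟨hi.1, hi.2.1⟩
      · intro i hi hiS
        simp only [hS_def, mem_filter, not_and] at hiS
        simp only [mem_filter] at hi
        by_contra hne
        exact (hiS hi.1 hi.2) hne
    -- `d` is the indicator of `T`
    have hd_eq : ∀ t, d t = if t ∈ T then 1 else 0 := by
      intro t
      rw [hd_def]
      show w t * groupNorm grp b t = _
      rw [hgnb t]
      by_cases ht : t ∈ T
      · rw [if_pos ht, if_pos ht, mul_inv_cancel₀ (hw t).ne']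
      · rw [if_neg ht, if_neg ht, mul_zero]
    have hsum_d : ∑ t, d t = (T.card : ℝ) := by
      rw [Finset.sum_congr rfl fun t _ => hd_eq t, Finset.sum_ite_mem, univ_inter]
      simp
    have hcard : T.card ≤ (k : ℕ) + 1 := by
      rw [hT_def, Finset.card_image_of_injective _ σ.injective]
      calc S.card ≤ (univ.filter (fun i => i ≤ k)).card := by
            refine Finset.card_le_card ?_
            intro i hi
            simp only [hS_def, mem_filter] at hi ⊢
            exact ⟨hi.1, hi.2.1⟩
        _ = (k : ℕ) + 1 := by
            rw [show univ.filter (fun i => i ≤ k) = Finset.Iic k from by ext; simp,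
              Fin.card_Iic]
    -- bound on the penalty
    have hJd : Jlam lam d ≤ ∑ i ∈ univ.filter (fun i => i ≤ k), lam i := by
      rw [Finset.sum_filter]
      unfold Jlam
      refine Finset.sum_le_sum fun i _ => ?_
      by_cases hik : i ≤ k
      · rw [if_pos hik]
        calc lam i * sortedAbs d i ≤ lam i * 1 :=
              mul_le_mul_of_nonneg_left (sortedAbs_le_one d hd01 i) (hlam_nonneg i)
          _ = lam i := mul_one _
      · rw [if_neg hik]
        have hki : (k : ℕ) + 1 ≤ (i : ℕ) := by
          have := Fin.lt_iff_val_lt_val.mp (not_le.mp hik)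
          omega
        have : (∑ j, d j) ≤ ((i : ℕ) : ℝ) := by
          rw [hsum_d]
          exact_mod_cast hcard.trans hki
        rw [sortedAbs_indicator_eq_zero d hd01 i this, mul_zero]
    -- the objective is positive at `b`
    have hFbpos : 0 < ∑ i, x i * b i - Jlam lam (fun i => w i * groupNorm grp b i) := by
      have : Jlam lam (fun i => w i * groupNorm grp b i) = Jlam lam d := rfl
      rw [this, hxb]
      linarith [hJd.trans_lt hk]
    -- conclude: the supremum is ⊤
    rw [iSup_eq_top]
    intro y hy
    induction y using EReal.rec with
    | bot =>
      exact ⟨b, EReal.bot_lt_coe _⟩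
    | coe r =>
      set Fb : ℝ := ∑ i, x i * b i - Jlam lam (fun i => w i * groupNorm grp b i) with hFb_def
      refine ⟨fun j => ((max r 0 + 1) / Fb) * b j, ?_⟩
      have ht : (0:ℝ) ≤ (max r 0 + 1) / Fb := by positivity
      have := hF_smul ((max r 0 + 1) / Fb) ht b
      rw [show (∑ i, x i * ((fun j => ((max r 0 + 1) / Fb) * b j) i)
          - Jlam lam (fun i => w i * groupNorm grp (fun j => ((max r 0 + 1) / Fb) * b j) i))
          = ((max r 0 + 1) / Fb) * Fb from this]
      rw [div_mul_cancel₀ _ hFbpos.ne']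
      exact_mod_cast (lt_of_le_of_lt (le_max_left r 0) (lt_add_one _))
    | top =>
      exact absurd hy (lt_irrefl _)
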